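/- For every matrix A in SU(1,1;ℂ), the real 3×3 matrix η(A) satisfies η(A)ᵀ · diag(1,1,−1) · η(A) = diag(1,1,−1), and its (3,3)-entry equals 1 + 2|b|² ≥ 1; that is, η(A) lies in SO⁺(2,1). -/

import Mathlib

open Matrix

noncomputable section

/-- The matrix `J = diag(1, -1)` in `M₂(ℂ)`. -/
def Jc : Matrix (Fin 2) (Fin 2) ℂ := !![1, 0; 0, -1]

/-- `SU(1,1;ℂ) = {A ∈ M₂(ℂ) : A*JA = J and det A = 1}`. -/
def SU11C : Set (Matrix (Fin 2) (Fin 2) ℂ) := {A | Aᴴ * Jc * A = Jc ∧ A.det = 1}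

/-- The double covering map `η : SU(1,1;ℂ) → SO⁺(2,1)`, written with
`a = A₀₀ = a₁ + a₂ i` and `b = A₀₁ = b₁ + b₂ i`. -/
def eta (A : Matrix (Fin 2) (Fin 2) ℂ) : Matrix (Fin 3) (Fin 3) ℝ :=
  let a1 := (A 0 0).re; let a2 := (A 0 0).im
  let b1 := (A 0 1).re; let b2 := (A 0 1).im
  !![1 - 2*a2^2 + 2*b1^2, -2*a1*a2 + 2*b1*b2, 2*a1*b1 - 2*a2*b2;
     2*a1*a2 + 2*b1*b2, 1 - 2*a2^2 + 2*b2^2, 2*a1*b2 + 2*a2*b1;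
     2*a1*b1 + 2*a2*b2, 2*a1*b2 - 2*a2*b1, 1 + 2*b1^2 + 2*b2^2]

lemma key_rel (A : Matrix (Fin 2) (Fin 2) ℂ) (hA : A ∈ SU11C) :
    (A 0 0).re^2 + (A 0 0).im^2 - (A 0 1).re^2 - (A 0 1).im^2 = 1 := by
  obtain ⟨h1, _⟩ := hA
  have h00 : ((Aᴴ * Jc * A) 0 0) = Jc 0 0 := by rw [h1]
  have h01 : ((Aᴴ * Jc * A) 0 1) = Jc 0 1 := by rw [h1]
  have h11 : ((Aᴴ * Jc * A) 1 1) = Jc 1 1 := by rw [h1]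
  simp [Matrix.mul_apply, Fin.sum_univ_two, Jc, Matrix.conjTranspose_apply] at h00 h01 h11
  have E1 := congrArg Complex.re h00
  have E2re := congrArg Complex.re h01
  have E2im := congrArg Complex.im h01
  have E4 := congrArg Complex.re h11
  simp [Complex.mul_re, Complex.mul_im] at E1 E2re E2im E4
  set a1 := (A 0 0).re; set a2 := (A 0 0).im
  set b1 := (A 0 1).re; set b2 := (A 0 1).im
  set c1 := (A 1 0).re; set c2 := (A 1 0).im
  set d1 := (A 1 1).re; set d2 := (A 1 1).im
  have H : (a1^2+a2^2)*(b1^2+b2^2) = (c1^2+c2^2)*(d1^2+d2^2) := by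
    linear_combination (a1*b1+a2*b2+c1*d1+c2*d2)*E2re + (a1*b2-a2*b1+c1*d2-c2*d1)*E2im
  linear_combination (b1^2+b2^2+1)*E1 + (c1^2+c2^2)*E4 - H

theorem stmt15 (A : Matrix (Fin 2) (Fin 2) ℂ) (hA : A ∈ SU11C) :
    (eta A)ᵀ * Matrix.diagonal ![1, 1, -1] * eta A = Matrix.diagonal ![1, 1, -1] ∧
    eta A 2 2 = 1 + 2 * ‖A 0 1‖ ^ 2 ∧
    1 ≤ eta A 2 2 := by
  have key := key_rel A hA
  set a1 := (A 0 0).re; set a2 := (A 0 0).im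
  set b1 := (A 0 1).re; set b2 := (A 0 1).im
  refine ⟨?_, ?_, ?_⟩
  · ext i j
    fin_cases i <;> fin_cases j <;>
      simp [eta, Matrix.mul_apply, Fin.sum_univ_succ, Matrix.diagonal, Matrix.transpose_apply]
    · linear_combination (4*a2^2 - 4*b1^2) * key
    · linear_combination (-4*b1*b2) * key
    · linear_combination (4*a2*b2) * key
    · linear_combination (-4*b1*b2) * key
    · linear_combination (4*a2^2 - 4*b2^2) * key
    · linear_combination (-4*a2*b1) * key
    · linear_combination (4*a2*b2) * key
    · linear_combination (-4*a2*b1) * key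
    · linear_combination (4*b1^2 + 4*b2^2) * key
  · simp only [eta]
    change (1 + 2*b1^2 + 2*b2^2 : ℝ) = _
    rw [Complex.sq_norm, Complex.normSq_apply]
    norm_num [Matrix.cons_val_zero, Matrix.cons_val_one]
    ring
  · simp [eta]
    nlinarith [sq_nonneg b1, sq_nonneg b2]
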